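/- Let ψ : ℝ^{2N} → ℝ^{2N} be differentiable with derivative Lipschitz of constant L > 0, let m > 0, ε ∈ (0,1), and let α, p ∈ ℝ^{2N} satisfy ψ'(α)p = −ψ(α), ψ(α) ≠ 0, and ‖p‖ ≤ m‖ψ(α)‖. Set λ̄ = (1 − ε)/(L m² ‖ψ(α)‖). Then for every λ with 0 < λ ≤ min{1, λ̄}, ‖ψ(α + λp)‖ ≤ (1 − ελ)‖ψ(α)‖. -/

import Mathlib

/-- Armijo-type acceptance for damped Newton steps: if `ψ'` is Lipschitz with
constant `L > 0`, `ψ'(α)p = -ψ(α)`, `ψ(α) ≠ 0`, `‖p‖ ≤ m‖ψ(α)‖` and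
`λ̄ = (1-ε)/(Lm²‖ψ(α)‖)`, then for all `0 < λ ≤ min{1, λ̄}` one has
`‖ψ(α + λp)‖ ≤ (1 - ελ)‖ψ(α)‖`. -/
theorem stmt_10 {N : ℕ}
    (ψ : EuclideanSpace ℝ (Fin (2 * N)) → EuclideanSpace ℝ (Fin (2 * N)))
    (hdiff : Differentiable ℝ ψ) (L m ε : ℝ) (hL : 0 < L) (hm : 0 < m)
    (hε : ε ∈ Set.Ioo (0 : ℝ) 1)
    (hlip : ∀ a b, ‖fderiv ℝ ψ a - fderiv ℝ ψ b‖ ≤ L * ‖a - b‖)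
    (α p : EuclideanSpace ℝ (Fin (2 * N)))
    (hp : fderiv ℝ ψ α p = -ψ α) (hne : ψ α ≠ 0)
    (hpb : ‖p‖ ≤ m * ‖ψ α‖) :
    ∀ lam : ℝ, 0 < lam → lam ≤ min 1 ((1 - ε) / (L * m ^ 2 * ‖ψ α‖)) →
      ‖ψ (α + lam • p)‖ ≤ (1 - ε * lam) * ‖ψ α‖ := by
  intro lam hlam hle
  obtain ⟨hε0, hε1⟩ := hε
  have hψ : 0 < ‖ψ α‖ := norm_pos_iff.mpr hne
  have hlam1 : lam ≤ 1 := le_trans hle (min_le_left _ _)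
  have hden : 0 < L * m ^ 2 * ‖ψ α‖ := by positivity
  have hlam2 : lam * (L * m ^ 2 * ‖ψ α‖) ≤ 1 - ε := by
    have := le_trans hle (min_le_right _ _)
    calc lam * (L * m ^ 2 * ‖ψ α‖)
        ≤ ((1 - ε) / (L * m ^ 2 * ‖ψ α‖)) * (L * m ^ 2 * ‖ψ α‖) := by
          exact mul_le_mul_of_nonneg_right this hden.le
      _ = 1 - ε := div_mul_cancel₀ _ hden.ne'
  set f : EuclideanSpace ℝ (Fin (2 * N)) → EuclideanSpace ℝ (Fin (2 * N)) :=
    fun x => ψ x - fderiv ℝ ψ α (x - α) with hf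
  have hfd : ∀ x, HasFDerivAt f (fderiv ℝ ψ x - fderiv ℝ ψ α) x := by
    intro x
    have h1 := (hdiff x).hasFDerivAt
    have h2 : HasFDerivAt (fun x => fderiv ℝ ψ α (x - α)) (fderiv ℝ ψ α) x := by
      have := ((fderiv ℝ ψ α).hasFDerivAt (x := x - α)).comp x
        ((hasFDerivAt_id x).sub_const α)
      simpa [Function.comp_def] using this
    exact h1.sub h2
  have key : ‖f (α + lam • p) - f α‖ ≤ (L * (lam * ‖p‖)) * ‖(α + lam • p) - α‖ := by
    apply (convex_segment α (α + lam • p)).norm_image_sub_le_of_norm_hasFDerivWithin_le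
      (f' := fun x => fderiv ℝ ψ x - fderiv ℝ ψ α)
      (fun x _ => (hfd x).hasFDerivWithinAt) ?_
      (left_mem_segment _ _ _) (right_mem_segment _ _ _)
    intro x hx
    obtain ⟨a, b, ha, hb, hab, hx⟩ := hx
    have hxα : x - α = b • (lam • p) := by
      rw [← hx]
      have : a = 1 - b := by linarith
      rw [this]
      module
    have hnx : ‖x - α‖ ≤ lam * ‖p‖ := by
      rw [hxα, norm_smul, norm_smul]
      simp only [Real.norm_eq_abs, abs_of_nonneg hb, abs_of_nonneg hlam.le]
      nlinarith [mul_nonneg hlam.le (norm_nonneg p)]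
    calc ‖fderiv ℝ ψ x - fderiv ℝ ψ α‖ ≤ L * ‖x - α‖ := hlip x α
      _ ≤ L * (lam * ‖p‖) := by nlinarith
  have hcomp : f (α + lam • p) - f α = ψ (α + lam • p) - (1 - lam) • ψ α := by
    simp only [hf, add_sub_cancel_left, map_smul, hp, sub_self, map_zero,
      smul_neg, sub_neg_eq_add, sub_smul, one_smul, sub_zero]
    abel
  have hnorm : ‖(α + lam • p) - α‖ = lam * ‖p‖ := by
    simp [norm_smul, abs_of_nonneg hlam.le]
  rw [hcomp, hnorm] at key
  have htri : ‖ψ (α + lam • p)‖ ≤ (1 - lam) * ‖ψ α‖ + L * (lam * ‖p‖) * (lam * ‖p‖) := by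
    have := norm_add_le (ψ (α + lam • p) - (1 - lam) • ψ α) ((1 - lam) • ψ α)
    simp only [sub_add_cancel] at this
    calc ‖ψ (α + lam • p)‖
        ≤ ‖ψ (α + lam • p) - (1 - lam) • ψ α‖ + ‖(1 - lam) • ψ α‖ := this
      _ ≤ L * (lam * ‖p‖) * (lam * ‖p‖) + (1 - lam) * ‖ψ α‖ := by
          rw [norm_smul, Real.norm_eq_abs, abs_of_nonneg (by linarith : (0:ℝ) ≤ 1 - lam)]
          linarith [key]
      _ = (1 - lam) * ‖ψ α‖ + L * (lam * ‖p‖) * (lam * ‖p‖) := by ring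
  have hpb2 : L * (lam * ‖p‖) * (lam * ‖p‖) ≤ lam * (1 - ε) * ‖ψ α‖ := by
    have hsq : ‖p‖ * ‖p‖ ≤ (m * ‖ψ α‖) * (m * ‖ψ α‖) :=
      mul_le_mul hpb hpb (norm_nonneg p) (by positivity)
    calc L * (lam * ‖p‖) * (lam * ‖p‖) = (L * lam * lam) * (‖p‖ * ‖p‖) := by ring
      _ ≤ (L * lam * lam) * ((m * ‖ψ α‖) * (m * ‖ψ α‖)) := by
          exact mul_le_mul_of_nonneg_left hsq (by positivity)
      _ = (lam * (L * m ^ 2 * ‖ψ α‖)) * (lam * ‖ψ α‖) := by ring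
      _ ≤ (1 - ε) * (lam * ‖ψ α‖) := by
          exact mul_le_mul_of_nonneg_right hlam2 (by positivity)
      _ = lam * (1 - ε) * ‖ψ α‖ := by ring
  calc ‖ψ (α + lam • p)‖ ≤ (1 - lam) * ‖ψ α‖ + L * (lam * ‖p‖) * (lam * ‖p‖) := htri
    _ ≤ (1 - lam) * ‖ψ α‖ + lam * (1 - ε) * ‖ψ α‖ := by linarith
    _ = (1 - ε * lam) * ‖ψ α‖ := by ring
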